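/- In the TRIX grid process with i.i.d. fair coin-flip wire delays, the skew between horizontal neighbors s(H) = d(1,H) − d(0,H) is a symmetric random variable: s(H) and −s(H) have the same distribution; in particular E[s(H)] = 0. -/

import Mathlib

/-- Median (second smallest) of three integers. -/
def med3 (a b c : ℤ) : ℤ := max (min a b) (min (max a b) c)

/-- TRIX pulse times: `trixD w y x` is the time `d(x,y)` at which node `(x,y)` pulses,
given wire delays `w x y c` on the wire from `(x+c,y)` to `(x,y+1)`. -/
def trixD (w : ℤ → ℕ → ℤ → ℤ) : ℕ → ℤ → ℤ
  | 0, _ => 0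
  | y + 1, x =>
      med3 (trixD w y (x - 1) + w x y (-1)) (trixD w y x + w x y 0)
        (trixD w y (x + 1) + w x y 1)

open MeasureTheory ProbabilityTheory

lemma med3_sub (k a b c : ℤ) : med3 (k - a) (k - b) (k - c) = k - med3 a b c := by
  simp only [med3]; omega

lemma trixD_flip (w : ℤ → ℕ → ℤ → ℤ) : ∀ (y : ℕ) (x : ℤ),
    trixD (fun x y c => 1 - w x y c) y x = y - trixD w y x := by
  intro y
  induction y with
  | zero => intro x; simp [trixD]
  | succ y ih =>
      intro x
      show med3 _ _ _ = _
      rw [ih, ih, ih]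
      have h : ∀ a b : ℤ, (y : ℤ) - a + (1 - b) = ((y : ℕ) + 1 : ℕ) - (a + b) := by
        intro a b; push_cast; ring
      rw [h, h, h, med3_sub]
      rfl

lemma trixD_congr (w w' : ℤ → ℕ → ℤ → ℤ) : ∀ (H : ℕ) (x : ℤ),
    (∀ x' y c, c.natAbs ≤ 1 → y + (x' - x).natAbs < H → w x' y c = w' x' y c) →
    trixD w H x = trixD w' H x := by
  intro H
  induction H with
  | zero => intro x _; rfl
  | succ y ih =>
      intro x h
      have hrec : ∀ c : ℤ, c.natAbs ≤ 1 → trixD w y (x + c) = trixD w' y (x + c) := by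
        intro c hc
        refine ih (x + c) fun x' y' c' hc' hy' => h x' y' c' hc' ?_
        have : (x' - x).natAbs ≤ (x' - (x + c)).natAbs + c.natAbs := by
          have := Int.natAbs_add_le (x' - (x + c)) c
          omega
        omega
      have h0 : ∀ c : ℤ, c.natAbs ≤ 1 → w x y c = w' x y c := fun c hc =>
        h x y c hc (by omega)
      show med3 _ _ _ = med3 _ _ _
      have e1 : x - 1 = x + (-1) := by ring
      have hx0 : trixD w y x = trixD w' y x := by
        have := hrec 0 (by decide); simpa using this
      rw [e1, hrec (-1) (by decide), hx0, hrec 1 (by decide),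
        h0 (-1) (by decide), h0 0 (by decide), h0 1 (by decide)]

/-- With i.i.d. fair coin-flip wire delays, the skew s(H) = d(1,H) − d(0,H) between
horizontal neighbors is a symmetric random variable; in particular E[s(H)] = 0. -/
theorem trixD_skew_symmetric {Ω : Type*} [MeasurableSpace Ω] (μ : Measure Ω)
    [IsProbabilityMeasure μ] (wb : ℤ × ℕ × ℤ → Ω → Bool)
    (hmeas : ∀ p, Measurable (wb p))
    (hindep : iIndepFun wb μ)
    (hdist : ∀ p, μ.map (wb p) = (PMF.uniformOfFintype Bool).toMeasure)
    (H : ℕ) :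
    μ.map (fun ω =>
        trixD (fun x y c => if wb (x, y, c) ω then 1 else 0) H 1 -
          trixD (fun x y c => if wb (x, y, c) ω then 1 else 0) H 0) =
      μ.map (fun ω =>
        -(trixD (fun x y c => if wb (x, y, c) ω then 1 else 0) H 1 -
            trixD (fun x y c => if wb (x, y, c) ω then 1 else 0) H 0)) ∧
    ∫ ω, ((trixD (fun x y c => if wb (x, y, c) ω then 1 else 0) H 1 -
          trixD (fun x y c => if wb (x, y, c) ω then 1 else 0) H 0 : ℤ) : ℝ) ∂μ = 0 := by
  classical
  set s : Ω → ℤ := fun ω =>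
    trixD (fun x y c => if wb (x, y, c) ω then 1 else 0) H 1 -
      trixD (fun x y c => if wb (x, y, c) ω then 1 else 0) H 0 with hs_def
  set S : Finset (ℤ × ℕ × ℤ) :=
    (Finset.Icc (-(H : ℤ)) (H + 1)) ×ˢ (Finset.range H) ×ˢ (Finset.Icc (-1 : ℤ) 1) with hS
  have hcov : ∀ x : ℤ, x = 0 ∨ x = 1 → ∀ (x' : ℤ) (y : ℕ) (c : ℤ),
      c.natAbs ≤ 1 → y + (x' - x).natAbs < H → (x', y, c) ∈ S := by
    intro x hx x' y c hc hy
    simp only [hS, Finset.mem_product, Finset.mem_Icc, Finset.mem_range]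
    rcases hx with h | h <;> subst h <;> omega
  set W : (↥S → Bool) → ℤ → ℕ → ℤ → ℤ := fun b x y c =>
    if h : (x, y, c) ∈ S then (if b ⟨(x, y, c), h⟩ then 1 else 0) else 0 with hW
  set F : (↥S → Bool) → ℤ := fun b => trixD (W b) H 1 - trixD (W b) H 0 with hF_def
  set T : Ω → (↥S → Bool) := fun ω p => wb p.1 ω with hT_def
  set T' : Ω → (↥S → Bool) := fun ω p => !wb p.1 ω with hT'_def
  -- F ∘ T = s
  have hFT : ∀ ω, F (T ω) = s ω := by
    intro ω
    have hx : ∀ x : ℤ, x = 0 ∨ x = 1 →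
        trixD (W (T ω)) H x = trixD (fun x y c => if wb (x, y, c) ω then 1 else 0) H x := by
      intro x hx
      refine trixD_congr _ _ H x fun x' y c hc hy => ?_
      have hmem := hcov x hx x' y c hc hy
      simp only [hW, hT_def, dif_pos hmem]
    simp only [hF_def, hs_def, hx 0 (Or.inl rfl), hx 1 (Or.inr rfl)]
  -- F ∘ T' = -s
  have hFT' : ∀ ω, F (T' ω) = -(s ω) := by
    intro ω
    have hx : ∀ x : ℤ, x = 0 ∨ x = 1 →
        trixD (W (T' ω)) H x =
          trixD (fun x y c => 1 - (if wb (x, y, c) ω then 1 else 0)) H x := by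
      intro x hx
      refine trixD_congr _ _ H x fun x' y c hc hy => ?_
      have hmem := hcov x hx x' y c hc hy
      simp only [hW, hT'_def, dif_pos hmem]
      have hbool : ∀ v : Bool, (if (!v) = true then (1 : ℤ) else 0) =
          1 - (if v = true then 1 else 0) := by decide
      exact hbool _
    have hflip := trixD_flip (fun x y c => if wb (x, y, c) ω then 1 else 0)
    simp only [hF_def, hs_def, hx 0 (Or.inl rfl), hx 1 (Or.inr rfl), hflip H 0, hflip H 1]
    ring
  have hT : Measurable T := measurable_pi_lambda _ fun p => hmeas p.1
  have hnot : Measurable Bool.not := measurable_of_countable _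
  have hT' : Measurable T' := measurable_pi_lambda _ fun p => hnot.comp (hmeas p.1)
  have hF : Measurable F := measurable_of_countable _
  -- key: the joint laws of T and T' agree
  have hhalf : ∀ (i : ℤ × ℕ × ℤ) (v : Bool), μ (wb i ⁻¹' {v}) = 2⁻¹ := by
    intro i v
    have h1 : μ.map (wb i) {v} = μ (wb i ⁻¹' {v}) :=
      Measure.map_apply (hmeas i) (measurableSet_singleton v)
    rw [← h1, hdist i, PMF.toMeasure_apply_singleton _ _ (measurableSet_singleton v),
      PMF.uniformOfFintype_apply]
    simp
  have hkey : μ.map T = μ.map T' := by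
    refine Measure.ext_of_singleton fun b => ?_
    rw [Measure.map_apply hT (measurableSet_singleton b),
      Measure.map_apply hT' (measurableSet_singleton b)]
    have hpre : ∀ (g : ℤ × ℕ × ℤ → Ω → Bool) (b : ↥S → Bool),
        (fun ω (p : ↥S) => g p.1 ω) ⁻¹' {b} =
          ⋂ i ∈ S, g i ⁻¹' (if h : i ∈ S then ({b ⟨i, h⟩} : Set Bool) else Set.univ) := by
      intro g b
      ext ω
      simp only [Set.mem_preimage, Set.mem_singleton_iff, funext_iff, Set.mem_iInter]
      constructor
      · intro hb i hi
        rw [dif_pos hi]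
        exact hb ⟨i, hi⟩
      · intro hb p
        have := hb p.1 p.2
        rwa [dif_pos p.2] at this
    have hmeasets : ∀ (b : ↥S → Bool) (i : ℤ × ℕ × ℤ), i ∈ S →
        MeasurableSet (if h : i ∈ S then ({b ⟨i, h⟩} : Set Bool) else Set.univ) := by
      intro b i _
      exact MeasurableSet.of_discrete
    have hwb' : iIndepFun (fun i ω => !wb i ω) μ :=
      hindep.comp (fun _ => Bool.not) fun _ => hnot
    have e1 : T ⁻¹' {b} =
        ⋂ i ∈ S, wb i ⁻¹' (if h : i ∈ S then ({b ⟨i, h⟩} : Set Bool) else Set.univ) :=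
      hpre wb b
    have e2 : T' ⁻¹' {b} =
        ⋂ i ∈ S, (fun ω => !wb i ω) ⁻¹'
          (if h : i ∈ S then ({b ⟨i, h⟩} : Set Bool) else Set.univ) :=
      hpre (fun i ω => !wb i ω) b
    rw [e1, e2, hindep.measure_inter_preimage_eq_mul S (hmeasets b),
      hwb'.measure_inter_preimage_eq_mul S (hmeasets b)]
    refine Finset.prod_congr rfl fun i hi => ?_
    rw [dif_pos hi]
    have : (fun ω => !wb i ω) ⁻¹' ({b ⟨i, hi⟩} : Set Bool) = wb i ⁻¹' {!b ⟨i, hi⟩} := by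
      ext ω
      simp only [Set.mem_preimage, Set.mem_singleton_iff]
      cases h : wb i ω <;> cases hb : b ⟨i, hi⟩ <;> simp
    rw [this, hhalf i _, hhalf i _]
  -- distributional symmetry
  have hmap1 : μ.map s = (μ.map T).map F := by
    rw [Measure.map_map hF hT]
    congr 1
    funext ω
    exact (hFT ω).symm
  have hmap2 : μ.map (fun ω => -(s ω)) = (μ.map T').map F := by
    rw [Measure.map_map hF hT']
    congr 1
    funext ω
    exact (hFT' ω).symm
  have hsym : μ.map s = μ.map (fun ω => -(s ω)) := by
    rw [hmap1, hmap2, hkey]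
  refine ⟨hsym, ?_⟩
  -- expectation zero
  have hs_meas : Measurable s := by
    have : s = F ∘ T := by funext ω; exact (hFT ω).symm
    rw [this]; exact hF.comp hT
  have hcast : Measurable fun z : ℤ => (z : ℝ) := measurable_of_countable _
  have h1 : ∫ ω, ((s ω : ℤ) : ℝ) ∂μ = ∫ z, (z : ℝ) ∂(μ.map s) :=
    (integral_map hs_meas.aemeasurable hcast.aestronglyMeasurable).symm
  have h2 : ∫ z, (z : ℝ) ∂(μ.map (fun ω => -(s ω))) = ∫ ω, ((-(s ω) : ℤ) : ℝ) ∂μ :=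
    integral_map (hs_meas.neg).aemeasurable hcast.aestronglyMeasurable
  have h3 : ∫ ω, ((-(s ω) : ℤ) : ℝ) ∂μ = -∫ ω, ((s ω : ℤ) : ℝ) ∂μ := by
    rw [← integral_neg]
    congr 1
    funext ω
    push_cast
    ring
  have key : ∫ ω, ((s ω : ℤ) : ℝ) ∂μ = -∫ ω, ((s ω : ℤ) : ℝ) ∂μ :=
    calc ∫ ω, ((s ω : ℤ) : ℝ) ∂μ = ∫ z, (z : ℝ) ∂(μ.map s) := h1
      _ = ∫ z, (z : ℝ) ∂(μ.map (fun ω => -(s ω))) := by rw [hsym]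
      _ = ∫ ω, ((-(s ω) : ℤ) : ℝ) ∂μ := h2
      _ = -∫ ω, ((s ω : ℤ) : ℝ) ∂μ := h3
  linarith [key]
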